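/- Let F be continuous and strictly increasing on [0,K] with F(0)=0, F(K)=1, and derivative f > 0 on (0,K). Let N ≥ 1, M ≥ 2 be integers and c, Ω > 0 with 0 < c·M·(NM−1)/(Ω·(M−1)) < 1. Then there is a unique b_D ∈ (0,K) with F(b_D) = 1 − c·M·(NM−1)/(Ω·(M−1)), and b_D is the unique b ∈ (0,K) satisfying the designer first-order condition Ω·(N·f(b)/(1 − F(b)))·(M−1)/(M·(NM−1)) = N·c·f(b)/(1 − F(b))². In particular, the designer equilibrium acceptance probability 1 − F(b_D) depends only on M, N, c, Ω and not on F. -/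

import Mathlib

/-- The designer equilibrium threshold: there is a unique `b_D ∈ (0,K)` with
`F b_D = 1 − c·M·(NM−1)/(Ω·(M−1))`, and `b_D` is the unique point of `(0,K)`
satisfying the designer first-order condition
`Ω·(N·f(b)/(1−F(b)))·(M−1)/(M·(NM−1)) = N·c·f(b)/(1−F(b))²`.
The acceptance probability `1 − F b_D` is distribution-free. -/
theorem stmt_12
    (K : ℝ) (hK : 0 < K)
    (F f : ℝ → ℝ)
    (hFcont : ContinuousOn F (Set.Icc 0 K))
    (hFmono : StrictMonoOn F (Set.Icc 0 K))
    (hF0 : F 0 = 0) (hFK : F K = 1)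
    (hderiv : ∀ x ∈ Set.Ioo 0 K, HasDerivAt F (f x) x)
    (hfpos : ∀ x ∈ Set.Ioo 0 K, 0 < f x)
    (N M : ℕ) (hN : 1 ≤ N) (hM : 2 ≤ M)
    (c Ω : ℝ) (hc : 0 < c) (hΩ : 0 < Ω)
    (hratio : 0 < c * M * ((N : ℝ) * M - 1) / (Ω * ((M : ℝ) - 1)))
    (hratio1 : c * M * ((N : ℝ) * M - 1) / (Ω * ((M : ℝ) - 1)) < 1) :
    ∃ bD ∈ Set.Ioo (0:ℝ) K,
      F bD = 1 - c * M * ((N : ℝ) * M - 1) / (Ω * ((M : ℝ) - 1)) ∧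
      (∀ b' ∈ Set.Ioo (0:ℝ) K,
        F b' = 1 - c * M * ((N : ℝ) * M - 1) / (Ω * ((M : ℝ) - 1)) → b' = bD) ∧
      (∀ b ∈ Set.Ioo (0:ℝ) K,
        (Ω * ((N : ℝ) * f b / (1 - F b)) * (((M : ℝ) - 1) / (M * ((N : ℝ) * M - 1)))
            = (N : ℝ) * c * f b / (1 - F b) ^ 2)
          ↔ b = bD) := by
  set r := c * M * ((N : ℝ) * M - 1) / (Ω * ((M : ℝ) - 1)) with hr
  -- basic positivity facts
  have hM1 : (1:ℝ) < (M:ℝ) := by exact_mod_cast hM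
  have hNM : (1:ℝ) < (N:ℝ) * M := by
    have hN1 : (1:ℝ) ≤ (N:ℝ) := by exact_mod_cast hN
    nlinarith
  have hMden : (0:ℝ) < Ω * ((M:ℝ) - 1) := by nlinarith
  -- existence via intermediate value theorem
  have hsub : Set.Ioo (F 0) (F K) ⊆ F '' Set.Ioo 0 K :=
    intermediate_value_Ioo hK.le hFcont
  have hmem : (1 - r) ∈ Set.Ioo (F 0) (F K) := by
    rw [hF0, hFK]; constructor <;> linarith
  obtain ⟨bD, hbD, hFbD⟩ := hsub hmem
  refine ⟨bD, hbD, hFbD, ?_, ?_⟩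
  · intro b' hb' hFb'
    exact hFmono.injOn (Set.mem_Icc_of_Ioo hb') (Set.mem_Icc_of_Ioo hbD)
      (hFb'.trans hFbD.symm)
  · intro b hb
    have hfb := hfpos b hb
    have hFb1 : F b < 1 := by
      rw [← hFK]
      exact hFmono (Set.mem_Icc_of_Ioo hb) (Set.right_mem_Icc.2 hK.le) hb.2
    have h1F : (0:ℝ) < 1 - F b := by linarith
    have hNpos : (0:ℝ) < (N:ℝ) := by
      have : (1:ℝ) ≤ (N:ℝ) := by exact_mod_cast hN
      linarith
    have hMN : (0:ℝ) < (M:ℝ) * ((N:ℝ) * (M:ℝ) - 1) := by nlinarith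
    have hrA : r * (Ω * ((M:ℝ) - 1)) = c * M * ((N : ℝ) * M - 1) := by
      rw [hr]; field_simp [ne_of_gt (sub_pos.2 hM1)]
    have factored :
        Ω * ((N : ℝ) * f b / (1 - F b)) * (((M : ℝ) - 1) / (M * ((N : ℝ) * M - 1)))
            - (N : ℝ) * c * f b / (1 - F b) ^ 2
          = ((N : ℝ) * f b / ((1 - F b) ^ 2 * ((M:ℝ) * ((N:ℝ) * M - 1))))
            * (Ω * ((M:ℝ) - 1) * (1 - F b) - c * (M:ℝ) * ((N:ℝ) * M - 1)) := by
      field_simp [ne_of_gt (sub_pos.2 hM1), ne_of_gt (sub_pos.2 hNM)]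
    have hpos : (0:ℝ) < (N : ℝ) * f b / ((1 - F b) ^ 2 * ((M:ℝ) * ((N:ℝ) * M - 1))) := by
      positivity
    have keyiff :
        (Ω * ((N : ℝ) * f b / (1 - F b)) * (((M : ℝ) - 1) / (M * ((N : ℝ) * M - 1)))
            = (N : ℝ) * c * f b / (1 - F b) ^ 2) ↔ 1 - F b = r := by
      constructor
      · intro heq
        have h0 : ((N : ℝ) * f b / ((1 - F b) ^ 2 * ((M:ℝ) * ((N:ℝ) * M - 1))))
            * (Ω * ((M:ℝ) - 1) * (1 - F b) - c * (M:ℝ) * ((N:ℝ) * M - 1)) = 0 := by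
          rw [← factored]; linarith
        have h2 : Ω * ((M:ℝ) - 1) * (1 - F b) - c * (M:ℝ) * ((N:ℝ) * M - 1) = 0 :=
          (mul_eq_zero.1 h0).resolve_left (ne_of_gt hpos)
        have h3 : (1 - F b) * (Ω * ((M:ℝ) - 1)) = r * (Ω * ((M:ℝ) - 1)) := by
          rw [hrA]; linarith
        exact mul_right_cancel₀ (ne_of_gt hMden) h3
      · intro h1r
        have h2 : Ω * ((M:ℝ) - 1) * (1 - F b) - c * (M:ℝ) * ((N:ℝ) * M - 1) = 0 := by
          rw [h1r]; linarith [hrA]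
        have := factored
        rw [h2, mul_zero] at this
        linarith
    rw [keyiff]
    constructor
    · intro h1r
      apply hFmono.injOn (Set.mem_Icc_of_Ioo hb) (Set.mem_Icc_of_Ioo hbD)
      rw [hFbD]; linarith
    · intro hbb
      subst hbb
      rw [hFbD]; ring
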